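/- With the notation of the context, assume in addition that S₁, S₂, S₃ are self-adjoint. Then for all θ, φ ∈ ℝ and k = 1,2,3 the covariant symbol satisfies ⟨ψ_n, S_k ψ_n⟩ = −s·n_k, where n = (n₁,n₂,n₃) = (sinθ cosφ, sinθ sinφ, cosθ); equivalently, for any c ∈ ℝ³, ⟨ψ_n, (c₁S₁ + c₂S₂ + c₃S₃)ψ_n⟩ = −s·(c·n). -/

import Mathlib

open Complex NormedSpace

private theorem myCompOfReal {F : Type*} [NormedAddCommGroup F] [NormedSpace ℂ F]
    {e : ℂ → F} {e' : F} {z : ℝ} (hf : HasDerivAt e e' (z : ℂ)) :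
    HasDerivAt (fun y : ℝ => e y) e' z := by
  have h := (hf.hasFDerivAt.restrictScalars ℝ).comp (x := z) Complex.ofRealCLM.hasFDerivAt
  simpa [Function.comp_def] using h.hasDerivAt

/-- The covariant symbol of the spin operators on spin coherent states:
`⟨ψ_n, S_k ψ_n⟩ = −s n_k`. -/
theorem stmt_11 {H : Type*} [NormedAddCommGroup H] [InnerProductSpace ℂ H] [CompleteSpace H]
    (S₁ S₂ S₃ : H →L[ℂ] H)
    (h12 : S₁ ∘L S₂ - S₂ ∘L S₁ = Complex.I • S₃)
    (h23 : S₂ ∘L S₃ - S₃ ∘L S₂ = Complex.I • S₁)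
    (h31 : S₃ ∘L S₁ - S₁ ∘L S₃ = Complex.I • S₂)
    (hsa1 : IsSelfAdjoint S₁) (hsa2 : IsSelfAdjoint S₂) (hsa3 : IsSelfAdjoint S₃)
    (s : ℝ) (hs : 0 < s)
    (ψ₀ : H) (hψ₀ : ‖ψ₀‖ = 1)
    (hS3ψ₀ : S₃ ψ₀ = -((s : ℂ) • ψ₀))
    (hSmψ₀ : (S₁ - Complex.I • S₂) ψ₀ = 0)
    (θ φ : ℝ) :
    let T : H →L[ℂ] H :=
      exp (((θ : ℂ) / 2) • (Complex.exp (Complex.I * φ) • (S₁ - Complex.I • S₂)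
        - Complex.exp (-(Complex.I * φ)) • (S₁ + Complex.I • S₂)))
    let ψn : H := T ψ₀
    let n₁ : ℝ := Real.sin θ * Real.cos φ
    let n₂ : ℝ := Real.sin θ * Real.sin φ
    let n₃ : ℝ := Real.cos θ
    ((inner ℂ ψn (S₁ ψn) : ℂ) = (-(s * n₁ : ℝ) : ℂ))
    ∧ ((inner ℂ ψn (S₂ ψn) : ℂ) = (-(s * n₂ : ℝ) : ℂ))
    ∧ ((inner ℂ ψn (S₃ ψn) : ℂ) = (-(s * n₃ : ℝ) : ℂ))
    ∧ (∀ c₁ c₂ c₃ : ℝ,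
        (inner ℂ ψn (((c₁ : ℂ) • S₁ + (c₂ : ℂ) • S₂ + (c₃ : ℂ) • S₃) ψn) : ℂ)
          = (-(s * (c₁ * n₁ + c₂ * n₂ + c₃ * n₃)) : ℝ)) := by
  intro T ψn n₁ n₂ n₃
  have h12' : S₁ * S₂ - S₂ * S₁ = Complex.I • S₃ := h12
  have h23' : S₂ * S₃ - S₃ * S₂ = Complex.I • S₁ := h23
  have h31' : S₃ * S₁ - S₁ * S₃ = Complex.I • S₂ := h31
  set u : ℝ := Real.cos φ with hu
  set v : ℝ := Real.sin φ with hv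
  set C : H →L[ℂ] H := (v:ℂ) • S₁ - (u:ℂ) • S₂ with hCdef
  set B : H →L[ℂ] H := Complex.I • C with hBdef
  -- commutators with C
  have c1 : S₁ * C - C * S₁ = (-((u:ℂ) * Complex.I)) • S₃ := by
    have h : S₁ * C - C * S₁ = (-(u:ℂ)) • (S₁ * S₂ - S₂ * S₁) := by
      simp only [hCdef, mul_sub, sub_mul, mul_smul_comm, smul_mul_assoc]; module
    rw [h, h12', smul_smul]; congr 1; ring
  have c2 : S₂ * C - C * S₂ = (-((v:ℂ) * Complex.I)) • S₃ := by
    have h : S₂ * C - C * S₂ = (-(v:ℂ)) • (S₁ * S₂ - S₂ * S₁) := by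
      simp only [hCdef, mul_sub, sub_mul, mul_smul_comm, smul_mul_assoc]; module
    rw [h, h12', smul_smul]; congr 1; ring
  have c3 : S₃ * C - C * S₃ = ((v:ℂ) * Complex.I) • S₂ + ((u:ℂ) * Complex.I) • S₁ := by
    have h : S₃ * C - C * S₃ = (v:ℂ) • (S₃ * S₁ - S₁ * S₃) + (u:ℂ) • (S₂ * S₃ - S₃ * S₂) := by
      simp only [hCdef, mul_sub, sub_mul, mul_smul_comm, smul_mul_assoc]; module
    rw [h, h31', h23', smul_smul, smul_smul]
  -- symmetry
  have sym1 : ∀ x y : H, (inner ℂ (S₁ x) y : ℂ) = inner ℂ x (S₁ y) := fun x y => hsa1.isSymmetric x y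
  have sym2 : ∀ x y : H, (inner ℂ (S₂ x) y : ℂ) = inner ℂ x (S₂ y) := fun x y => hsa2.isSymmetric x y
  have sym3 : ∀ x y : H, (inner ℂ (S₃ x) y : ℂ) = inner ℂ x (S₃ y) := fun x y => hsa3.isSymmetric x y
  have symC : ∀ x y : H, (inner ℂ (C x) y : ℂ) = inner ℂ x (C y) := by
    intro x y
    simp only [hCdef, ContinuousLinearMap.sub_apply, ContinuousLinearMap.smul_apply,
      inner_sub_left, inner_sub_right, inner_smul_left, inner_smul_right,
      Complex.conj_ofReal, sym1 x y, sym2 x y]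
  -- the flow
  set P : ℝ → H := fun t => exp ((t:ℂ) • B) ψ₀ with hPdef
  have hPd : ∀ t : ℝ, HasDerivAt P (B (P t)) t := by
    intro t
    have h1 : HasDerivAt (fun z : ℂ => exp (z • B)) (B * exp ((t:ℂ) • B)) (t:ℂ) :=
      hasDerivAt_exp_smul_const' B (t:ℂ)
    have h3 := myCompOfReal (h1.clm_apply (hasDerivAt_const (t:ℂ) ψ₀))
    simpa [hPdef, ContinuousLinearMap.mul_apply] using h3
  set g₁ : ℝ → ℂ := fun t => inner ℂ (P t) (S₁ (P t)) with hg1def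
  set g₂ : ℝ → ℂ := fun t => inner ℂ (P t) (S₂ (P t)) with hg2def
  set g₃ : ℝ → ℂ := fun t => inner ℂ (P t) (S₃ (P t)) with hg3def
  have key : ∀ (S : H →L[ℂ] H), (∀ x y : H, (inner ℂ (S x) y : ℂ) = inner ℂ x (S y)) →
      ∀ t : ℝ, HasDerivAt (fun t : ℝ => (inner ℂ (P t) (S (P t)) : ℂ))
        (Complex.I * (inner ℂ (P t) ((S * C - C * S) (P t)) : ℂ)) t := by
    intro S hS t
    have hSP : HasDerivAt (fun t : ℝ => S (P t)) (S (B (P t))) t := by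
      have h := (hasDerivAt_const (t:ℝ) (S.restrictScalars ℝ)).clm_apply (hPd t)
      simpa using h
    have h := HasDerivAt.inner ℂ (hPd t) hSP
    refine h.congr_deriv (Eq.symm ?_)
    have e1 : S (B (P t)) = Complex.I • S (C (P t)) := by
      rw [hBdef, ContinuousLinearMap.smul_apply, map_smul]
    have e2 : (inner ℂ (B (P t)) (S (P t)) : ℂ)
        = -Complex.I * (inner ℂ (P t) (C (S (P t))) : ℂ) := by
      rw [hBdef, ContinuousLinearMap.smul_apply, inner_smul_left, Complex.conj_I, symC]
      try ring
    rw [e1, inner_smul_right, e2]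
    simp only [ContinuousLinearMap.sub_apply, ContinuousLinearMap.mul_apply, inner_sub_right]
    ring
  have hg1 : ∀ t : ℝ, HasDerivAt g₁ ((u:ℂ) * g₃ t) t := by
    intro t
    have h := key S₁ sym1 t
    rw [c1] at h
    rw [hg1def]
    convert h using 1
    simp only [ContinuousLinearMap.smul_apply, inner_smul_right, hg3def]
    linear_combination ((u:ℂ) * (inner ℂ (P t) (S₃ (P t)) : ℂ)) * Complex.I_mul_I
  have hg2 : ∀ t : ℝ, HasDerivAt g₂ ((v:ℂ) * g₃ t) t := by
    intro t
    have h := key S₂ sym2 t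
    rw [c2] at h
    rw [hg2def]
    convert h using 1
    simp only [ContinuousLinearMap.smul_apply, inner_smul_right, hg3def]
    linear_combination ((v:ℂ) * (inner ℂ (P t) (S₃ (P t)) : ℂ)) * Complex.I_mul_I
  have hg3 : ∀ t : ℝ, HasDerivAt g₃ (-((u:ℂ) * g₁ t + (v:ℂ) * g₂ t)) t := by
    intro t
    have h := key S₃ sym3 t
    rw [c3] at h
    rw [hg3def]
    convert h using 1
    simp only [ContinuousLinearMap.add_apply, ContinuousLinearMap.smul_apply,
      inner_add_right, inner_smul_right, hg1def, hg2def]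
    linear_combination (-((u:ℂ) * (inner ℂ (P t) (S₁ (P t)) : ℂ)
      + (v:ℂ) * (inner ℂ (P t) (S₂ (P t)) : ℂ))) * Complex.I_mul_I
  -- conserved quantities
  have huvC : (u:ℂ)^2 + (v:ℂ)^2 = 1 := by
    rw [hu, hv]; exact_mod_cast Real.cos_sq_add_sin_sq φ
  have hexp1 : ∀ t : ℝ, HasDerivAt (fun t : ℝ => Complex.exp (Complex.I * t))
      (Complex.I * Complex.exp (Complex.I * t)) t := by
    intro t
    have h : HasDerivAt (fun z : ℂ => Complex.exp (Complex.I * z))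
        (Complex.exp (Complex.I * t) * Complex.I) (t:ℂ) := by
      simpa using ((hasDerivAt_id (t:ℂ)).const_mul Complex.I).cexp
    have := myCompOfReal h
    rw [mul_comm] at this
    exact this
  have hexp2 : ∀ t : ℝ, HasDerivAt (fun t : ℝ => Complex.exp (-(Complex.I * t)))
      (-Complex.I * Complex.exp (-(Complex.I * t))) t := by
    intro t
    have h : HasDerivAt (fun z : ℂ => Complex.exp (-(Complex.I * z)))
        (Complex.exp (-(Complex.I * t)) * -Complex.I) (t:ℂ) := by
      simpa using (((hasDerivAt_id (t:ℂ)).const_mul Complex.I).neg).cexp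
    have := myCompOfReal h
    rw [mul_comm] at this
    exact this
  set G : ℝ → ℂ := fun t => Complex.exp (Complex.I * t)
      * ((u:ℂ) * g₁ t + (v:ℂ) * g₂ t + Complex.I * g₃ t) with hGdef
  set G' : ℝ → ℂ := fun t => Complex.exp (-(Complex.I * t))
      * ((u:ℂ) * g₁ t + (v:ℂ) * g₂ t - Complex.I * g₃ t) with hG'def
  set K : ℝ → ℂ := fun t => (v:ℂ) * g₁ t - (u:ℂ) * g₂ t with hKdef
  have hGd : ∀ t : ℝ, HasDerivAt G 0 t := by
    intro t
    have hq := (((hg1 t).const_mul ((u:ℂ))).add ((hg2 t).const_mul ((v:ℂ)))).add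
      ((hg3 t).const_mul Complex.I)
    have h := (hexp1 t).mul hq
    rw [hGdef]
    refine h.congr_deriv (Eq.symm ?_)
    simp only [Pi.add_apply]
    linear_combination (-(Complex.exp (Complex.I * t) * g₃ t)) * Complex.I_mul_I
      + (-(Complex.exp (Complex.I * t) * g₃ t)) * huvC
  have hG'd : ∀ t : ℝ, HasDerivAt G' 0 t := by
    intro t
    have hq := (((hg1 t).const_mul ((u:ℂ))).add ((hg2 t).const_mul ((v:ℂ)))).sub
      ((hg3 t).const_mul Complex.I)
    have h := (hexp2 t).mul hq
    rw [hG'def]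
    refine h.congr_deriv (Eq.symm ?_)
    simp only [Pi.add_apply, Pi.sub_apply]
    linear_combination (-(Complex.exp (-(Complex.I * t)) * g₃ t)) * Complex.I_mul_I
      + (-(Complex.exp (-(Complex.I * t)) * g₃ t)) * huvC
  have hKd : ∀ t : ℝ, HasDerivAt K 0 t := by
    intro t
    have h := ((hg1 t).const_mul ((v:ℂ))).sub ((hg2 t).const_mul ((u:ℂ)))
    rw [hKdef]
    refine h.congr_deriv (Eq.symm ?_)
    ring
  have hGc : G θ = G 0 :=
    is_const_of_deriv_eq_zero (fun t => (hGd t).differentiableAt) (fun t => (hGd t).deriv) θ 0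
  have hG'c : G' θ = G' 0 :=
    is_const_of_deriv_eq_zero (fun t => (hG'd t).differentiableAt) (fun t => (hG'd t).deriv) θ 0
  have hKc : K θ = K 0 :=
    is_const_of_deriv_eq_zero (fun t => (hKd t).differentiableAt) (fun t => (hKd t).deriv) θ 0
  -- initial values
  have hP0 : P (0:ℝ) = ψ₀ := by
    simp [hPdef, NormedSpace.exp_zero]
  have hg3_0 : g₃ 0 = -(s:ℂ) := by
    rw [hg3def]
    simp only [hP0, hS3ψ₀]
    rw [inner_neg_right, inner_smul_right, inner_self_eq_norm_sq_to_K, hψ₀]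
    norm_num
  have hS1S2 : (inner ℂ ψ₀ (S₁ ψ₀) : ℂ) = 0 ∧ (inner ℂ ψ₀ (S₂ ψ₀) : ℂ) = 0 := by
    have e1 : (inner ℂ ψ₀ (S₁ ψ₀) : ℂ) = Complex.I * inner ℂ ψ₀ (S₂ ψ₀) := by
      have h : S₁ ψ₀ = Complex.I • S₂ ψ₀ := by
        have h := hSmψ₀
        rw [ContinuousLinearMap.sub_apply, ContinuousLinearMap.smul_apply, sub_eq_zero] at h
        exact h
      rw [h, inner_smul_right]
    have eA : (inner ℂ ψ₀ (S₁ ψ₀) : ℂ) + Complex.I * inner ℂ ψ₀ (S₂ ψ₀) = 0 := by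
      have h0 : (inner ℂ ((S₁ - Complex.I • S₂) ψ₀) ψ₀ : ℂ) = 0 := by
        rw [hSmψ₀, inner_zero_left]
      rw [ContinuousLinearMap.sub_apply, ContinuousLinearMap.smul_apply, inner_sub_left,
        inner_smul_left, Complex.conj_I, sym1, sym2] at h0
      linear_combination h0
    have hIb : Complex.I * (inner ℂ ψ₀ (S₂ ψ₀) : ℂ) = 0 := by linear_combination (eA - e1) / 2
    rw [mul_eq_zero] at hIb
    have hb := hIb.resolve_left Complex.I_ne_zero
    exact ⟨by rw [e1, hb, mul_zero], hb⟩
  have hg1_0 : g₁ 0 = 0 := by rw [hg1def]; simp only [hP0]; exact hS1S2.1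
  have hg2_0 : g₂ 0 = 0 := by rw [hg2def]; simp only [hP0]; exact hS1S2.2
  -- the three constancy equations
  have E1 : Complex.exp (Complex.I * θ) * ((u:ℂ) * g₁ θ + (v:ℂ) * g₂ θ + Complex.I * g₃ θ)
      = Complex.I * (-(s:ℂ)) := by
    have h := hGc
    simp only [hGdef, Complex.ofReal_zero, mul_zero, Complex.exp_zero, one_mul,
      hg1_0, hg2_0, hg3_0] at h
    linear_combination h
  have E2 : Complex.exp (-(Complex.I * θ)) * ((u:ℂ) * g₁ θ + (v:ℂ) * g₂ θ - Complex.I * g₃ θ)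
      = Complex.I * (s:ℂ) := by
    have h := hG'c
    simp only [hG'def, Complex.ofReal_zero, mul_zero, Complex.exp_zero, one_mul, neg_zero,
      hg1_0, hg2_0, hg3_0] at h
    linear_combination h
  have E3 : (v:ℂ) * g₁ θ - (u:ℂ) * g₂ θ = 0 := by
    have h := hKc
    simp only [hKdef, hg1_0, hg2_0, mul_zero, sub_zero] at h
    linear_combination h
  -- trig expansions
  have e1θ : Complex.exp (Complex.I * θ) = (Real.cos θ : ℂ) + (Real.sin θ : ℂ) * Complex.I := by
    rw [mul_comm, Complex.exp_mul_I, ← Complex.ofReal_cos, ← Complex.ofReal_sin]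
  have e2θ : Complex.exp (-(Complex.I * θ)) = (Real.cos θ : ℂ) - (Real.sin θ : ℂ) * Complex.I := by
    rw [show -(Complex.I * (θ:ℂ)) = (-θ : ℝ) * Complex.I by push_cast; ring,
      Complex.exp_mul_I, ← Complex.ofReal_cos, ← Complex.ofReal_sin, Real.cos_neg, Real.sin_neg]
    push_cast
    ring
  rw [e1θ] at E1
  rw [e2θ] at E2
  have pyth : (Real.cos θ : ℂ)^2 + (Real.sin θ : ℂ)^2 = 1 := by
    exact_mod_cast Real.cos_sq_add_sin_sq θ
  have eqA : (Real.cos θ:ℂ) * ((u:ℂ) * g₁ θ + (v:ℂ) * g₂ θ) - (Real.sin θ:ℂ) * g₃ θ = 0 := by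
    linear_combination (1/2 : ℂ) * E1 + (1/2 : ℂ) * E2
      + (-(Real.sin θ:ℂ) * g₃ θ) * Complex.I_mul_I
  have eqB : (Real.cos θ:ℂ) * g₃ θ + (Real.sin θ:ℂ) * ((u:ℂ) * g₁ θ + (v:ℂ) * g₂ θ)
      = -(s:ℂ) := by
    linear_combination (-(Complex.I)/2) * E1 + (Complex.I/2) * E2
      + ((Real.cos θ:ℂ) * g₃ θ + (Real.sin θ:ℂ) * ((u:ℂ) * g₁ θ + (v:ℂ) * g₂ θ) + (s:ℂ))
        * Complex.I_mul_I
  have hc : g₃ θ = -((s:ℂ) * (Real.cos θ:ℂ)) := by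
    linear_combination (Real.cos θ:ℂ) * eqB - (Real.sin θ:ℂ) * eqA - g₃ θ * pyth
  have hw : (u:ℂ) * g₁ θ + (v:ℂ) * g₂ θ = -((s:ℂ) * (Real.sin θ:ℂ)) := by
    linear_combination (Real.sin θ:ℂ) * eqB + (Real.cos θ:ℂ) * eqA
      - ((u:ℂ) * g₁ θ + (v:ℂ) * g₂ θ) * pyth
  have ha : g₁ θ = -((s:ℂ) * ((Real.sin θ:ℂ) * (u:ℂ))) := by
    linear_combination (u:ℂ) * hw + (v:ℂ) * E3 - g₁ θ * huvC
  have hb : g₂ θ = -((s:ℂ) * ((Real.sin θ:ℂ) * (v:ℂ))) := by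
    linear_combination (v:ℂ) * hw - (u:ℂ) * E3 - g₂ θ * huvC
  -- identify ψn with P θ
  have harg : (((θ:ℂ)) / 2) • (Complex.exp (Complex.I * φ) • (S₁ - Complex.I • S₂)
      - Complex.exp (-(Complex.I * φ)) • (S₁ + Complex.I • S₂)) = (θ:ℂ) • B := by
    have e1φ : Complex.exp (Complex.I * φ) = (u:ℂ) + (v:ℂ) * Complex.I := by
      rw [mul_comm, Complex.exp_mul_I, ← Complex.ofReal_cos, ← Complex.ofReal_sin, hu, hv]
    have e2φ : Complex.exp (-(Complex.I * φ)) = (u:ℂ) - (v:ℂ) * Complex.I := by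
      rw [show -(Complex.I * (φ:ℂ)) = (-φ : ℝ) * Complex.I by push_cast; ring,
        Complex.exp_mul_I, ← Complex.ofReal_cos, ← Complex.ofReal_sin, Real.cos_neg,
        Real.sin_neg, hu, hv]
      push_cast
      ring
    rw [e1φ, e2φ, hBdef, hCdef]
    match_scalars <;> ring
  have hψn : ψn = P θ := by
    show exp (((θ:ℂ) / 2) • (Complex.exp (Complex.I * φ) • (S₁ - Complex.I • S₂)
      - Complex.exp (-(Complex.I * φ)) • (S₁ + Complex.I • S₂))) ψ₀ = P θ
    rw [harg]
  have ha' : (inner ℂ (P θ) (S₁ (P θ)) : ℂ) = -((s:ℂ) * ((Real.sin θ:ℂ) * (u:ℂ))) := ha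
  have hb' : (inner ℂ (P θ) (S₂ (P θ)) : ℂ) = -((s:ℂ) * ((Real.sin θ:ℂ) * (v:ℂ))) := hb
  have hc' : (inner ℂ (P θ) (S₃ (P θ)) : ℂ) = -((s:ℂ) * (Real.cos θ:ℂ)) := hc
  refine ⟨?_, ?_, ?_, ?_⟩
  · show (inner ℂ ψn (S₁ ψn) : ℂ) = -(((s * (Real.sin θ * u)) : ℝ) : ℂ)
    rw [hψn, ha']
    push_cast
    ring
  · show (inner ℂ ψn (S₂ ψn) : ℂ) = -(((s * (Real.sin θ * v)) : ℝ) : ℂ)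
    rw [hψn, hb']
    push_cast
    ring
  · show (inner ℂ ψn (S₃ ψn) : ℂ) = -(((s * Real.cos θ) : ℝ) : ℂ)
    rw [hψn, hc']
    push_cast
    ring
  · intro c₁ c₂ c₃
    show (inner ℂ ψn (((c₁ : ℂ) • S₁ + (c₂ : ℂ) • S₂ + (c₃ : ℂ) • S₃) ψn) : ℂ)
      = ((-(s * (c₁ * (Real.sin θ * u) + c₂ * (Real.sin θ * v) + c₃ * Real.cos θ)) : ℝ) : ℂ)
    rw [hψn]
    simp only [ContinuousLinearMap.add_apply, ContinuousLinearMap.smul_apply,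
      inner_add_right, inner_smul_right, ha', hb', hc']
    push_cast
    ring
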